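/- Let n ≥ 1 and let {T_j : j ∈ Fin (n²)} be a family of n×n complex matrices that is an orthonormal basis of the space of n×n complex matrices with respect to the Hilbert–Schmidt inner product, i.e. Tr(T_i† T_j) = δ_{ij} and the family spans. Then the family {(1/n) · T_j T_j† : j ∈ Fin (n²)} is a POVM: each matrix (1/n) T_j T_j† is Hermitian and positive semidefinite, and ∑_{j} (1/n) T_j T_j† equals the n×n identity matrix. -/

import Mathlib

open Matrix
open scoped ComplexOrder

/-- **POVM construction from an orthonormal basis of matrices.**
If `T : Fin (n^2) → Matrix (Fin n) (Fin n) ℂ` is orthonormal with respect to the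
Hilbert–Schmidt inner product `⟨A, B⟩ = Tr(Aᴴ B)` and spans the whole matrix space,
then the family `(1/n) • T j * (T j)ᴴ` is a POVM: each element is Hermitian and
positive semidefinite, and the family sums to the identity. -/
theorem povm_from_orthonormal_basis (n : ℕ) (hn : 1 ≤ n)
    (T : Fin (n ^ 2) → Matrix (Fin n) (Fin n) ℂ)
    (horth : ∀ i j, ((T i)ᴴ * T j).trace = if i = j then 1 else 0)
    (hspan : Submodule.span ℂ (Set.range T) = ⊤) :
    (∀ j, ((1 / (n : ℂ)) • (T j * (T j)ᴴ)).IsHermitian) ∧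
    (∀ j, ((1 / (n : ℂ)) • (T j * (T j)ᴴ)).PosSemidef) ∧
    ∑ j, (1 / (n : ℂ)) • (T j * (T j)ᴴ) = (1 : Matrix (Fin n) (Fin n) ℂ) := by
  have hn0 : (n : ℂ) ≠ 0 := by exact_mod_cast Nat.pos_of_ne_zero (by omega) |>.ne'
  have hc : (0 : ℂ) ≤ 1 / (n : ℂ) := by
    have h1 : ((1 / (n : ℝ) : ℝ) : ℂ) = 1 / (n : ℂ) := by push_cast; ring
    rw [← h1]
    exact Complex.zero_le_real.mpr (by positivity)
  have hpsd : ∀ j, ((1 / (n : ℂ)) • (T j * (T j)ᴴ)).PosSemidef := by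
    intro j
    have h1 : (T j * (T j)ᴴ).PosSemidef := Matrix.posSemidef_self_mul_conjTranspose (T j)
    constructor
    · unfold Matrix.IsHermitian
      rw [Matrix.conjTranspose_smul, h1.1]
      congr 1
      simp [Complex.ext_iff, Complex.div_im]
    · intro x
      have h2 := mul_nonneg hc (h1.2 x)
      simpa only [Finsupp.mul_sum, Matrix.smul_apply, smul_eq_mul, mul_assoc, mul_left_comm] using h2
  refine ⟨fun j => (hpsd j).isHermitian, hpsd, ?_⟩
  -- completeness relation
  set e : Fin n × Fin n ≃ Fin (n ^ 2) := finProdFinEquiv.trans (finCongr (pow_two n).symm)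
  set U : Matrix (Fin (n ^ 2)) (Fin (n ^ 2)) ℂ :=
    Matrix.of (fun j k => T j (e.symm k).1 (e.symm k).2) with hU
  have hUU : U * Uᴴ = 1 := by
    ext i j
    simp only [Matrix.mul_apply, Matrix.conjTranspose_apply, Matrix.one_apply, hU,
      Matrix.of_apply]
    rw [← Equiv.sum_comp e (fun k => T i (e.symm k).1 (e.symm k).2 *
      star (T j (e.symm k).1 (e.symm k).2))]
    simp only [Equiv.symm_apply_apply]
    have := horth j i
    rw [Matrix.trace, eq_comm] at this
    simp only [Matrix.diag_apply, Matrix.mul_apply, Matrix.conjTranspose_apply,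
      RingHom.coe_comp, starRingEnd_apply] at this
    rw [Fintype.sum_prod_type]
    rw [show (if j = i then (1:ℂ) else 0) = (if i = j then 1 else 0) by
      by_cases h : i = j <;> simp [h, eq_comm]] at this
    rw [eq_comm, this, Finset.sum_comm]
    exact Finset.sum_congr rfl fun a _ => Finset.sum_congr rfl fun b _ => mul_comm _ _
  have hUU' : Uᴴ * U = 1 := mul_eq_one_comm.mp hUU
  have hcomp : ∀ a b c d, (∑ j, star (T j a b) * T j c d) =
      if (a, b) = (c, d) then 1 else 0 := by
    intro a b c d
    have := congrFun (congrFun hUU' (e (a, b))) (e (c, d))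
    simp only [Matrix.mul_apply, Matrix.conjTranspose_apply, Matrix.one_apply, hU,
      Matrix.of_apply, Equiv.symm_apply_apply] at this
    rw [this]
    simp [e.apply_eq_iff_eq]
  ext a c
  simp only [Matrix.sum_apply, Matrix.smul_apply, Matrix.mul_apply,
    Matrix.conjTranspose_apply, smul_eq_mul]
  rw [← Finset.mul_sum]
  have h2 : (∑ j, ∑ b, T j a b * star (T j c b)) =
      ∑ b : Fin n, ∑ j, star (T j c b) * T j a b := by
    rw [Finset.sum_comm]
    exact Finset.sum_congr rfl fun b _ => Finset.sum_congr rfl fun j _ => mul_comm _ _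
  rw [h2]
  have h3 : (∑ b : Fin n, ∑ j, star (T j c b) * T j a b) =
      ∑ _b : Fin n, if c = a then (1:ℂ) else 0 := by
    refine Finset.sum_congr rfl fun b _ => ?_
    rw [hcomp c b a b]
    simp [Prod.ext_iff]
  rw [h3]
  simp only [Finset.sum_const, Finset.card_univ, Fintype.card_fin, nsmul_eq_mul]
  by_cases h : c = a
  · subst h
    simp only [if_pos rfl, Matrix.one_apply_eq, mul_one]
    field_simp
    simp
  · simp [Matrix.one_apply, h, Ne.symm h]
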